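/- Suppose 2^n = ∑_{i=1}^m d_i · 10^{e_i} with 1 ≤ d_i ≤ 9 and 0 ≤ e_1 < e_2 < ... < e_m, where n is a positive integer. Then for every k with 2 ≤ k ≤ m, 2^{e_k} ≤ ∑_{i=1}^{k-1} d_i · 10^{e_i}. -/

import Mathlib

theorem stmt6 (n m : ℕ) (d e : ℕ → ℕ) (hn : 0 < n)
    (hd : ∀ i, 1 ≤ i → i ≤ m → 1 ≤ d i ∧ d i ≤ 9)
    (he : ∀ i j, 1 ≤ i → i < j → j ≤ m → e i < e j)
    (heq : 2 ^ n = ∑ i ∈ Finset.Icc 1 m, d i * 10 ^ (e i)) :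
    ∀ k, 2 ≤ k → k ≤ m → 2 ^ (e k) ≤ ∑ i ∈ Finset.Icc 1 (k - 1), d i * 10 ^ (e i) := by
  intro k hk2 hkm
  set S := ∑ i ∈ Finset.Icc 1 (k - 1), d i * 10 ^ (e i) with hS
  set T := ∑ i ∈ Finset.Icc k m, d i * 10 ^ (e i) with hT
  have hsplit : 2 ^ n = S + T := by
    rw [heq, hS, hT, ← Finset.sum_union]
    · congr 1
      ext x
      simp only [Finset.mem_union, Finset.mem_Icc]
      omega
    · rw [Finset.disjoint_left]
      intro a ha hb
      simp only [Finset.mem_Icc] at ha hb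
      omega
  -- S > 0
  have hSpos : 0 < S := by
    have h1 : (1 : ℕ) ∈ Finset.Icc 1 (k - 1) := by
      simp only [Finset.mem_Icc]; omega
    have hd1 : 1 ≤ d 1 := (hd 1 le_rfl (by omega)).1
    calc 0 < d 1 * 10 ^ (e 1) := by positivity
      _ ≤ S := Finset.single_le_sum (f := fun i => d i * 10 ^ (e i)) (fun i _ => Nat.zero_le _) h1
  -- 10^(e k) divides T
  have hdvdT : 2 ^ (e k) ∣ T := by
    apply Finset.dvd_sum
    intro i hi
    simp only [Finset.mem_Icc] at hi
    have hek : e k ≤ e i := by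
      rcases eq_or_lt_of_le hi.1 with h | h
      · rw [h]
      · exact (he k i (by omega) h hi.2).le
    exact Dvd.dvd.mul_left (pow_dvd_pow 2 hek |>.trans (pow_dvd_pow_of_dvd (by norm_num) _)) _
  -- T ≥ 2^(e k) hence e k ≤ n
  have hT2 : 2 ^ (e k) ≤ T := by
    have hk : k ∈ Finset.Icc k m := by simp only [Finset.mem_Icc]; omega
    have hdk : 1 ≤ d k := (hd k (by omega) hkm).1
    calc 2 ^ (e k) ≤ 10 ^ (e k) := Nat.pow_le_pow_left (by norm_num) _
      _ ≤ d k * 10 ^ (e k) := Nat.le_mul_of_pos_left _ hdk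
      _ ≤ T := Finset.single_le_sum (f := fun i => d i * 10 ^ (e i)) (fun i _ => Nat.zero_le _) hk
  have hekn : e k ≤ n := by
    have : 2 ^ (e k) ≤ 2 ^ n := by omega
    exact (Nat.pow_le_pow_iff_right one_lt_two).mp this
  have hdvd2n : 2 ^ (e k) ∣ 2 ^ n := pow_dvd_pow 2 hekn
  have hdvdS : 2 ^ (e k) ∣ S := by
    have : S = 2 ^ n - T := by omega
    rw [this]
    exact Nat.dvd_sub hdvd2n hdvdT
  exact Nat.le_of_dvd hSpos hdvdS
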